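/- Let R = D[X;σ,δ] over a division ring D, and let f ∈ R be a bounded polynomial with monic bound f*. Let π ∈ R generate a twosided ideal that properly divides Rf* (f* = α π for a twosided nonconstant α, π nonconstant). Then p = gcd_r(f, π) is a right divisor of f whose bound is π; in particular f has a proper factorization f = g·p with g bounded. -/

import Mathlib

/-- An Ore extension `R = D[X;σ,δ]`: `R` is a ring containing `D` via `C`, with a
distinguished element `X`, which is a free left `D`-module on the powers of `X`
(encoded by the coefficient equivalence `e`), subject to `X·a = σ(a)·X + δ(a)`,
where `δ` is a `σ`-derivation. -/
structure OreExt (D : Type*) [DivisionRing D] (σ : D ≃+* D) (δ : D → D)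
    (R : Type*) [Ring R] where
  C : D →+* R
  X : R
  e : R ≃+ (ℕ →₀ D)
  e_symm_single : ∀ (n : ℕ) (d : D), e.symm (Finsupp.single n d) = C d * X ^ n
  X_mul_C : ∀ a : D, X * C a = C (σ a) * X + C (δ a)
  δ_add : ∀ a b : D, δ (a + b) = δ a + δ b
  δ_mul : ∀ a b : D, δ (a * b) = σ a * δ b + δ a * b

namespace OreExt

variable {D R : Type*} [DivisionRing D] [Ring R] {σ : D ≃+* D} {δ : D → D}

/-- Degree, with `deg 0 = ⊥` (i.e. `-∞`). -/
noncomputable def deg (O : OreExt D σ δ R) (f : R) : WithBot ℕ := (O.e f).support.max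

/-- Degree as a natural number (`0` for the zero polynomial). -/
noncomputable def ndeg (O : OreExt D σ δ R) (f : R) : ℕ := WithBot.unbotD 0 ((O.e f).support.max)

/-- Leading coefficient. -/
noncomputable def lc (O : OreExt D σ δ R) (f : R) : D := O.e f (O.ndeg f)

/-- `f` is irreducible: it has positive degree and in any factorization one of the two
factors is a constant (an element of `D`). -/
def IrreducibleOre (O : OreExt D σ δ R) (f : R) : Prop :=
  0 < O.ndeg f ∧ ∀ g h : R, f = g * h → (∃ d : D, g = O.C d) ∨ (∃ d : D, h = O.C d)

end OreExt

/-- A left ideal is twosided. -/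
def IsTwoSidedIdeal' {R : Type*} [Ring R] (I : Ideal R) : Prop :=
  ∀ x ∈ I, ∀ r : R, x * r ∈ I

/-- `b` is a bound of `f`: the left ideal `Rb` is twosided and is the largest twosided
ideal contained in `Rf`. -/
def IsBound {R : Type*} [Ring R] (f b : R) : Prop :=
  Ideal.span {b} ≤ Ideal.span {f} ∧ IsTwoSidedIdeal' (Ideal.span {b}) ∧
    ∀ J : Ideal R, IsTwoSidedIdeal' J → J ≤ Ideal.span {f} → J ≤ Ideal.span {b}

namespace OreExt

variable {D R : Type*} [DivisionRing D] [Ring R] {σ : D ≃+* D} {δ : D → D}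

theorem delta_zero (O : OreExt D σ δ R) : δ 0 = 0 := by
  have h : δ ((0:D) + 0) = δ 0 + δ 0 := O.δ_add 0 0
  rw [add_zero] at h
  exact (left_eq_add.mp h)

theorem e_monomial (O : OreExt D σ δ R) (n : ℕ) (d : D) :
    O.e (O.C d * O.X ^ n) = Finsupp.single n d := by
  rw [← O.e_symm_single, AddEquiv.apply_symm_apply]

theorem e_C (O : OreExt D σ δ R) (d : D) : O.e (O.C d) = Finsupp.single 0 d := by
  simpa using O.e_monomial 0 d

theorem repr_sum (O : OreExt D σ δ R) (f : R) :
    (O.e f).sum (fun n d => O.C d * O.X ^ n) = f := by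
  have h : (O.e f).sum (fun n d => O.C d * O.X ^ n)
      = (O.e f).sum (fun n d => O.e.symm (Finsupp.single n d)) := by
    apply Finsupp.sum_congr
    intro n _
    rw [O.e_symm_single]
  rw [h, ← map_finsuppSum, Finsupp.sum_single, AddEquiv.symm_apply_apply]

end OreExt
namespace OreExt

variable {D R : Type*} [DivisionRing D] [Ring R] {σ : D ≃+* D} {δ : D → D}

/-- `f` has degree at most `n`. -/
def DegLe (O : OreExt D σ δ R) (f : R) (n : ℕ) : Prop := ∀ k, n < k → O.e f k = 0

theorem degLe_mono (O : OreExt D σ δ R) {f : R} {n n' : ℕ} (h : O.DegLe f n)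
    (hnn : n ≤ n') : O.DegLe f n' := fun k hk => h k (lt_of_le_of_lt hnn hk)

theorem mem_support_le_ndeg (O : OreExt D σ δ R) {f : R} {k : ℕ}
    (h : k ∈ (O.e f).support) : k ≤ O.ndeg f := by
  have h1 : (k : WithBot ℕ) ≤ (O.e f).support.max := Finset.le_max h
  rcases hm : (O.e f).support.max with _ | m
  · rw [hm] at h1; exact absurd h1 (by simp [WithBot.none_eq_bot])
  · rw [hm] at h1
    have : k ≤ m := by
      rwa [← WithBot.coe_le_coe]
    simp only [ndeg, hm]; exact this

theorem degLe_ndeg (O : OreExt D σ δ R) (f : R) : O.DegLe f (O.ndeg f) := by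
  intro k hk
  by_contra h
  exact absurd (O.mem_support_le_ndeg (Finsupp.mem_support_iff.mpr h)) (by omega)

theorem lc_ne_zero (O : OreExt D σ δ R) {f : R} (hf : f ≠ 0) : O.lc f ≠ 0 := by
  have hef : O.e f ≠ 0 := fun h => hf (by
    have := congrArg O.e.symm h
    simpa using this)
  have hne : (O.e f).support.Nonempty := by
    rwa [Finsupp.support_nonempty_iff]
  obtain ⟨m, hm⟩ := Finset.max_of_nonempty hne
  have hmem : m ∈ (O.e f).support := Finset.mem_of_max hm
  have : O.ndeg f = m := by simp [ndeg, hm]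
  rw [lc, this]
  exact Finsupp.mem_support_iff.mp hmem

theorem eq_zero_of_e_zero (O : OreExt D σ δ R) {f : R} (h : ∀ k, O.e f k = 0) :
    f = 0 := by
  have : O.e f = 0 := Finsupp.ext h
  have := congrArg O.e.symm this
  simpa using this

theorem ndeg_eq_of (O : OreExt D σ δ R) {f : R} {n : ℕ} (h1 : O.e f n ≠ 0)
    (h2 : O.DegLe f n) : O.ndeg f = n := by
  have hmem : n ∈ (O.e f).support := Finsupp.mem_support_iff.mpr h1
  have hle : n ≤ O.ndeg f := O.mem_support_le_ndeg hmem
  have hge : O.ndeg f ≤ n := by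
    by_contra h
    exact absurd (h2 _ (by omega)) (O.lc_ne_zero (fun h0 => h1 (by rw [h0]; simp)))
  omega

end OreExt
namespace OreExt

variable {D R : Type*} [DivisionRing D] [Ring R] {σ : D ≃+* D} {δ : D → D}

theorem sum_single_apply {M : Type*} [AddCommMonoid M] (l : ℕ →₀ D) (g : ℕ → D → M)
    (hg : ∀ n, g n 0 = 0) (m : ℕ) :
    (l.sum fun n d => Finsupp.single n (g n d)) m = g m (l m) := by
  rw [Finsupp.sum_apply]
  have h1 : (l.sum fun n d => (Finsupp.single n (g n d)) m)
      = l.sum fun n d => if n = m then g n d else 0 := by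
    apply Finsupp.sum_congr
    intro n _
    rw [Finsupp.single_apply]
  rw [h1, Finsupp.sum_ite_eq' l m (fun n d => g n d)]
  by_cases hm : m ∈ l.support
  · simp [hm]
  · simp [hm, Finsupp.notMem_support_iff.mp hm, hg]

theorem X_mul_monomial (O : OreExt D σ δ R) (n : ℕ) (d : D) :
    O.X * (O.C d * O.X ^ n) = O.C (σ d) * O.X ^ (n + 1) + O.C (δ d) * O.X ^ n := by
  rw [← mul_assoc, O.X_mul_C, add_mul, mul_assoc, ← pow_succ']

theorem e_X_mul (O : OreExt D σ δ R) (f : R) :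
    O.e (O.X * f) = (O.e f).sum
      (fun n d => Finsupp.single (n + 1) (σ d) + Finsupp.single n (δ d)) := by
  conv_lhs => rw [← O.repr_sum f]
  rw [Finsupp.mul_sum]
  have h1 : ((O.e f).sum fun n d => O.X * (O.C d * O.X ^ n))
      = (O.e f).sum fun n d => (O.C (σ d) * O.X ^ (n+1) + O.C (δ d) * O.X ^ n) := by
    apply Finsupp.sum_congr
    intro n _
    exact O.X_mul_monomial n _
  rw [h1, map_finsuppSum]
  apply Finsupp.sum_congr
  intro n _
  rw [map_add, O.e_monomial, O.e_monomial]

end OreExt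
namespace OreExt

variable {D R : Type*} [DivisionRing D] [Ring R] {σ : D ≃+* D} {δ : D → D}

theorem sum_single_shift_apply {M : Type*} [AddCommMonoid M] (l : ℕ →₀ D)
    (g : D → M) (hg : g 0 = 0) (m : ℕ) :
    (l.sum fun n d => Finsupp.single (n + 1) (g d)) (m + 1) = g (l m) := by
  rw [Finsupp.sum_apply]
  have h1 : (l.sum fun n d => (Finsupp.single (n + 1) (g d)) (m + 1))
      = l.sum fun n d => if n = m then g d else 0 := by
    apply Finsupp.sum_congr
    intro n _
    rw [Finsupp.single_apply]
    simp only [add_left_inj]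
  rw [h1, Finsupp.sum_ite_eq' l m (fun n d => g d)]
  by_cases hm : m ∈ l.support
  · simp [hm]
  · simp [hm, Finsupp.notMem_support_iff.mp hm, hg]

theorem sum_single_shift_apply_zero {M : Type*} [AddCommMonoid M] (l : ℕ →₀ D)
    (g : D → M) :
    (l.sum fun n d => Finsupp.single (n + 1) (g d)) 0 = 0 := by
  rw [Finsupp.sum_apply]
  have h1 : (l.sum fun n d => (Finsupp.single (n + 1) (g d)) 0)
      = l.sum fun n d => (0 : M) := by
    apply Finsupp.sum_congr
    intro n _
    rw [Finsupp.single_apply]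
    simp
  rw [h1]; exact Finset.sum_const_zero

theorem e_X_mul_succ (O : OreExt D σ δ R) (f : R) (m : ℕ) :
    O.e (O.X * f) (m + 1) = σ (O.e f m) + δ (O.e f (m + 1)) := by
  rw [O.e_X_mul, Finsupp.sum_add, Finsupp.add_apply,
    sum_single_shift_apply _ _ (map_zero σ),
    sum_single_apply _ _ (fun _ => O.delta_zero)]

theorem e_X_mul_zero (O : OreExt D σ δ R) (f : R) :
    O.e (O.X * f) 0 = δ (O.e f 0) := by
  rw [O.e_X_mul, Finsupp.sum_add, Finsupp.add_apply,
    sum_single_shift_apply_zero,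
    sum_single_apply _ _ (fun _ => O.delta_zero), zero_add]

theorem e_C_mul (O : OreExt D σ δ R) (d : D) (f : R) (m : ℕ) :
    O.e (O.C d * f) m = d * O.e f m := by
  conv_lhs => rw [← O.repr_sum f]
  rw [Finsupp.mul_sum]
  have h1 : ((O.e f).sum fun n a => O.C d * (O.C a * O.X ^ n))
      = (O.e f).sum fun n a => O.C (d * a) * O.X ^ n := by
    apply Finsupp.sum_congr
    intro n _
    rw [← mul_assoc, ← map_mul]
  rw [h1, map_finsuppSum]
  have h2 : ((O.e f).sum fun n a => O.e (O.C (d * a) * O.X ^ n))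
      = (O.e f).sum fun n a => Finsupp.single n (d * a) := by
    apply Finsupp.sum_congr
    intro n _
    rw [O.e_monomial]
  rw [h2, sum_single_apply _ _ (fun _ => mul_zero d)]

end OreExt
namespace OreExt

variable {D R : Type*} [DivisionRing D] [Ring R] {σ : D ≃+* D} {δ : D → D}

theorem degLe_X_mul (O : OreExt D σ δ R) {f : R} {n : ℕ} (h : O.DegLe f n) :
    O.DegLe (O.X * f) (n + 1) ∧ O.e (O.X * f) (n + 1) = σ (O.e f n) := by
  constructor
  · intro k hk
    match k, hk with
    | (m+1), hk =>
      rw [O.e_X_mul_succ, h m (by omega), h (m+1) (by omega), map_zero, O.delta_zero,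
        add_zero]
  · rw [O.e_X_mul_succ, h (n+1) (by omega), O.delta_zero, add_zero]

theorem degLe_X_pow_mul (O : OreExt D σ δ R) {f : R} {n : ℕ} (j : ℕ)
    (h : O.DegLe f n) :
    O.DegLe (O.X ^ j * f) (n + j) ∧ O.e (O.X ^ j * f) (n + j) = (⇑σ)^[j] (O.e f n) := by
  induction j with
  | zero => simpa using h
  | succ j ih =>
    have hX : O.X ^ (j+1) * f = O.X * (O.X ^ j * f) := by rw [pow_succ', mul_assoc]
    have h1 := O.degLe_X_mul ih.1
    constructor
    · rw [hX]; exact (show n + (j+1) = (n+j) + 1 by omega) ▸ h1.1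
    · rw [hX, show n + (j+1) = (n+j) + 1 by omega, h1.2, ih.2,
        Function.iterate_succ_apply']

theorem degLe_monomial_mul (O : OreExt D σ δ R) {f : R} {n : ℕ} (d : D) (j : ℕ)
    (h : O.DegLe f n) :
    O.DegLe (O.C d * O.X ^ j * f) (n + j) ∧
      O.e (O.C d * O.X ^ j * f) (n + j) = d * (⇑σ)^[j] (O.e f n) := by
  have h1 := O.degLe_X_pow_mul j h
  rw [mul_assoc]
  constructor
  · intro k hk
    rw [O.e_C_mul, h1.1 k hk, mul_zero]
  · rw [O.e_C_mul, h1.2]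

theorem mul_degLe (O : OreExt D σ δ R) (g : R) {f : R} {n : ℕ} (h : O.DegLe f n) :
    O.DegLe (g * f) (O.ndeg g + n) ∧
      O.e (g * f) (O.ndeg g + n) = O.lc g * (⇑σ)^[O.ndeg g] (O.e f n) := by
  have key : ∀ k, O.e (g * f) k
      = ∑ i ∈ (O.e g).support, O.e (O.C (O.e g i) * O.X ^ i * f) k := by
    intro k
    conv_lhs => rw [← O.repr_sum g]
    rw [Finsupp.sum_mul, map_finsuppSum, Finsupp.sum_apply]
    rfl
  constructor
  · intro k hk
    rw [key]
    apply Finset.sum_eq_zero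
    intro i hi
    exact (O.degLe_monomial_mul _ i h).1 k
      (by have := O.mem_support_le_ndeg hi; omega)
  · rw [key]
    by_cases hg : g = 0
    · subst hg
      simp [lc]
    · rw [Finset.sum_eq_single_of_mem (O.ndeg g)
        (Finsupp.mem_support_iff.mpr (O.lc_ne_zero hg))]
      · rw [show O.ndeg g + n = n + O.ndeg g by omega]
        exact (O.degLe_monomial_mul _ _ h).2
      · intro i hi hne
        exact (O.degLe_monomial_mul _ i h).1 _
          (by have := O.mem_support_le_ndeg hi; omega)

end OreExt
namespace OreExt

variable {D R : Type*} [DivisionRing D] [Ring R] {σ : D ≃+* D} {δ : D → D}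

theorem iterate_ne_zero' {x : D} (hx : x ≠ 0) (k : ℕ) : (⇑σ)^[k] x ≠ 0 := by
  induction k with
  | zero => simpa using hx
  | succ k ih =>
    rw [Function.iterate_succ_apply']
    intro h
    exact ih (by simpa using congrArg σ.symm h)

theorem mul_ne_zero_ndeg (O : OreExt D σ δ R) {g f : R} (hg : g ≠ 0) (hf : f ≠ 0) :
    g * f ≠ 0 ∧ O.ndeg (g * f) = O.ndeg g + O.ndeg f := by
  have h := O.mul_degLe g (O.degLe_ndeg f)
  have hne : O.e (g * f) (O.ndeg g + O.ndeg f) ≠ 0 := by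
    rw [h.2]
    exact mul_ne_zero (O.lc_ne_zero hg) (iterate_ne_zero' (O.lc_ne_zero hf) _)
  refine ⟨fun h0 => hne (by rw [h0]; simp), O.ndeg_eq_of hne h.1⟩

theorem mul_ne_zero'' (O : OreExt D σ δ R) {g f : R} (hg : g ≠ 0) (hf : f ≠ 0) :
    g * f ≠ 0 := (O.mul_ne_zero_ndeg hg hf).1

theorem mul_cancel_right (O : OreExt D σ δ R) {x y c : R} (hc : c ≠ 0)
    (h : x * c = y * c) : x = y := by
  by_contra hne
  have hxy : x - y ≠ 0 := sub_ne_zero_of_ne hne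
  have : (x - y) * c = 0 := by rw [sub_mul, h, sub_self]
  exact O.mul_ne_zero'' hxy hc this

theorem eq_C_of_ndeg_zero (O : OreExt D σ δ R) {f : R} (h : O.ndeg f = 0) :
    f = O.C (O.e f 0) := by
  have hd : O.DegLe f 0 := h ▸ O.degLe_ndeg f
  have he : O.e f = Finsupp.single 0 (O.e f 0) := by
    apply Finsupp.ext
    intro k
    match k with
    | 0 => simp
    | (j+1) => rw [hd (j+1) (by omega), Finsupp.single_apply]; simp
  have := congrArg O.e.symm he
  rw [AddEquiv.symm_apply_apply, O.e_symm_single, pow_zero, mul_one] at this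
  exact this

/-- Division algorithm. -/
theorem div_algo (O : OreExt D σ δ R) {g : R} (hg : g ≠ 0) (f : R) :
    ∃ q r : R, f = q * g + r ∧ (r = 0 ∨ O.ndeg r < O.ndeg g) := by
  by_cases hf0 : f = 0
  · exact ⟨0, 0, by simp [hf0], Or.inl rfl⟩
  obtain ⟨n, hn⟩ : ∃ n, O.ndeg f ≤ n := ⟨O.ndeg f, le_refl _⟩
  clear hf0
  induction n using Nat.strong_induction_on generalizing f with
  | _ n ih =>
    by_cases hf0 : f = 0
    · exact ⟨0, 0, by simp [hf0], Or.inl rfl⟩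
    by_cases hlt : O.ndeg f < O.ndeg g
    · exact ⟨0, f, by simp, Or.inr hlt⟩
    push_neg at hlt
    set m := O.ndeg g with hm
    set N := O.ndeg f with hN
    set d : D := O.lc f * ((⇑σ)^[N - m] (O.lc g))⁻¹ with hd
    set f' := f - O.C d * O.X ^ (N - m) * g with hf'
    have hmon := O.degLe_monomial_mul d (N - m) (O.degLe_ndeg g)
    have hNm : m + (N - m) = N := by omega
    rw [hNm] at hmon
    have hcoef : O.e (O.C d * O.X ^ (N - m) * g) N = O.e f N := by
      rw [hmon.2, hd, show (O.e g) (O.ndeg g) = O.lc g from rfl, mul_assoc,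
        inv_mul_cancel₀ (iterate_ne_zero' (O.lc_ne_zero hg) _), mul_one]
      rfl
    have hf'deg : ∀ k, N ≤ k → O.e f' k = 0 := by
      intro k hk
      rcases eq_or_lt_of_le hk with hk' | hk'
      · rw [hf', map_sub, Finsupp.sub_apply, ← hk', hcoef, sub_self]
      · rw [hf', map_sub, Finsupp.sub_apply, O.degLe_ndeg f k hk', hmon.1 k hk',
          sub_self]
    by_cases hf'0 : f' = 0
    · refine ⟨O.C d * O.X ^ (N - m), 0, ?_, Or.inl rfl⟩
      rw [add_zero]
      exact sub_eq_zero.mp hf'0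
    · have hf'lt : O.ndeg f' < N := by
        have h1 : O.e f' (O.ndeg f') ≠ 0 := O.lc_ne_zero hf'0
        by_contra hcon
        push_neg at hcon
        exact h1 (hf'deg _ hcon)
      obtain ⟨q', r, hqr, hr⟩ := ih (O.ndeg f') (by omega) f' (le_refl _)
      refine ⟨O.C d * O.X ^ (N - m) + q', r, ?_, hr⟩
      have : f = O.C d * O.X ^ (N - m) * g + f' := by rw [hf']; noncomm_ring
      rw [this, hqr, add_mul]
      noncomm_ring

/-- Every left ideal is principal. -/
theorem left_ideal_principal (O : OreExt D σ δ R) (I : Ideal R) :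
    ∃ c : R, I = Ideal.span {c} := by
  by_cases hI : I = ⊥
  · exact ⟨0, by simp [hI, Ideal.span_singleton_eq_bot.mpr]⟩
  classical
  have hex : ∃ n, ∃ x ∈ I, x ≠ 0 ∧ O.ndeg x = n := by
    obtain ⟨x, hxI, hx0⟩ := Submodule.exists_mem_ne_zero_of_ne_bot hI
    exact ⟨O.ndeg x, x, hxI, hx0, rfl⟩
  obtain ⟨c, hcI, hc0, hcn⟩ := Nat.find_spec hex
  refine ⟨c, le_antisymm ?_ ?_⟩
  · intro x hxI
    obtain ⟨q, r, hqr, hr⟩ := O.div_algo hc0 x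
    have hrI : r ∈ I := by
      have : r = x - q * c := by rw [hqr]; noncomm_ring
      rw [this]
      exact Submodule.sub_mem I hxI (Ideal.mul_mem_left I q hcI)
    rcases eq_or_ne r 0 with hr0 | hr0
    · rw [hqr, hr0, add_zero]
      exact Ideal.mem_span_singleton'.mpr ⟨q, rfl⟩
    · exfalso
      rcases hr with h0 | hrlt
      · exact hr0 h0
      · have h1 : Nat.find hex ≤ O.ndeg r := Nat.find_min' hex ⟨r, hrI, hr0, rfl⟩
        omega
  · rw [Ideal.span_le, Set.singleton_subset_iff]
    exact hcI

end OreExt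
namespace OreExt

variable {D R : Type*} [DivisionRing D] [Ring R] {σ : D ≃+* D} {δ : D → D}

theorem ndeg_zero (O : OreExt D σ δ R) : O.ndeg (0 : R) = 0 := by
  simp [ndeg]

theorem ne_zero_of_ndeg_pos (O : OreExt D σ δ R) {x : R} (h : 1 ≤ O.ndeg x) :
    x ≠ 0 := by
  intro h0
  rw [h0, O.ndeg_zero] at h
  omega

/-- Every element has a bound provided the ideal of twosided multiples is... in fact
every element has a (possibly zero) bound. -/
theorem exists_isBound (O : OreExt D σ δ R) (x : R) : ∃ c : R, IsBound x c := by
  set U : Set R := ⋃ J ∈ {J : Ideal R | IsTwoSidedIdeal' J ∧ J ≤ Ideal.span {x}},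
    (J : Set R) with hU
  set T : Ideal R := Submodule.span R U with hT
  have hUsub : ∀ J : Ideal R, IsTwoSidedIdeal' J → J ≤ Ideal.span {x} → J ≤ T := by
    intro J h1 h2 y hy
    apply Submodule.subset_span
    exact Set.mem_biUnion (show J ∈ _ from ⟨h1, h2⟩) hy
  have hTle : T ≤ Ideal.span {x} := by
    rw [hT, Submodule.span_le]
    rintro y hy
    obtain ⟨J, hJ, hyJ⟩ := Set.mem_iUnion₂.mp hy
    exact hJ.2 hyJ
  have hT2 : IsTwoSidedIdeal' T := by
    intro z hz r
    induction hz using Submodule.span_induction with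
    | mem y hy =>
      obtain ⟨J, hJ, hyJ⟩ := Set.mem_iUnion₂.mp hy
      apply Submodule.subset_span
      exact Set.mem_biUnion hJ (hJ.1 y hyJ r)
    | zero => rw [zero_mul]; exact Submodule.zero_mem T
    | add a b _ _ ha hb => rw [add_mul]; exact Submodule.add_mem T ha hb
    | smul s a _ ha =>
      rw [smul_eq_mul, mul_assoc]
      exact Ideal.mul_mem_left T s ha
  obtain ⟨c, hc⟩ := O.left_ideal_principal T
  rw [hc] at hTle hT2 hUsub
  exact ⟨c, hTle, hT2, hUsub⟩

theorem alpha_mul_mem {f b α π p : R}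
    (hb1 : Ideal.span {b} ≤ Ideal.span {f}) (hfact : b = α * π)
    (hα2 : IsTwoSidedIdeal' (Ideal.span {α} : Ideal R))
    (hp : Ideal.span {f} ⊔ Ideal.span {π} = Ideal.span {p}) :
    ∀ j ∈ (Ideal.span {p} : Ideal R), α * j ∈ (Ideal.span {f} : Ideal R) := by
  intro j hj
  rw [← hp] at hj
  obtain ⟨y, hy, z, hz, hyz⟩ := Submodule.mem_sup.mp hj
  obtain ⟨u, hu⟩ := Ideal.mem_span_singleton'.mp hy
  obtain ⟨v, hv⟩ := Ideal.mem_span_singleton'.mp hz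
  obtain ⟨w, hw⟩ := Ideal.mem_span_singleton'.mp
    (hα2 α (Ideal.mem_span_singleton'.mpr ⟨1, one_mul α⟩) u)
  obtain ⟨w', hw'⟩ := Ideal.mem_span_singleton'.mp
    (hα2 α (Ideal.mem_span_singleton'.mpr ⟨1, one_mul α⟩) v)
  have h1 : α * j = w * (α * f) + w' * b := by
    rw [← hyz, mul_add, ← hu, ← hv, ← mul_assoc, ← hw, ← mul_assoc, ← hw', hfact]
    noncomm_ring
  rw [h1]
  apply Submodule.add_mem
  · exact Ideal.mul_mem_left _ w (Ideal.mul_mem_left _ α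
      (Ideal.mem_span_singleton'.mpr ⟨1, one_mul f⟩))
  · exact Ideal.mul_mem_left _ w' (hb1 (Ideal.mem_span_singleton'.mpr ⟨1, one_mul b⟩))

end OreExt

/-- if `f` has monic bound `f* = α·π` with `α, π` twosided of positive
degree, and `p = (f, π)_r`, then `p` is a right divisor of `f` with bound `π`, and `f`
has a proper factorization `f = g·p` with `g` bounded. -/
theorem right_factor_from_bound_factor {D R : Type*} [DivisionRing D] [Ring R]
    (σ : D ≃+* D) (δ : D → D) (O : OreExt D σ δ R)
    (f b α π : R) (hf : f ≠ 0) (hb : IsBound f b) (hmonic : O.lc b = 1)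
    (hfact : b = α * π)
    (hα2 : IsTwoSidedIdeal' (Ideal.span {α} : Ideal R))
    (hπ2 : IsTwoSidedIdeal' (Ideal.span {π} : Ideal R))
    (hαdeg : 1 ≤ O.ndeg α) (hπdeg : 1 ≤ O.ndeg π)
    (p : R) (hp : Ideal.span {f} ⊔ Ideal.span {π} = Ideal.span {p}) :
    (∃ g : R, f = g * p ∧ ∃ bg : R, bg ≠ 0 ∧ IsBound g bg) ∧ IsBound p π := by
  have hα0 : α ≠ 0 := O.ne_zero_of_ndeg_pos hαdeg
  have hπ0 : π ≠ 0 := O.ne_zero_of_ndeg_pos hπdeg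
  have hself : ∀ y : R, y ∈ (Ideal.span {y} : Ideal R) :=
    fun y => Ideal.mem_span_singleton'.mpr ⟨1, one_mul y⟩
  have hπp : Ideal.span {π} ≤ Ideal.span {p} := by rw [← hp]; exact le_sup_right
  have hp0 : p ≠ 0 := by
    intro h0
    rw [h0] at hπp
    have : π ∈ (Ideal.span {(0:R)} : Ideal R) := hπp (hself π)
    rw [Ideal.span_singleton_eq_bot.mpr rfl] at this
    exact hπ0 (by simpa using this)
  -- f = g * p
  have hfl : Ideal.span {f} ≤ Ideal.span {p} := by rw [← hp]; exact le_sup_left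
  have hfp : f ∈ (Ideal.span {p} : Ideal R) := hfl (hself f)
  obtain ⟨g, hg⟩ := Ideal.mem_span_singleton'.mp hfp
  -- α ∈ Rg
  have hαg : α ∈ (Ideal.span {g} : Ideal R) := by
    have h1 : α * p ∈ (Ideal.span {f} : Ideal R) :=
      OreExt.alpha_mul_mem hb.1 hfact hα2 hp (p := p) p (hself p)
    obtain ⟨c', hc'⟩ := Ideal.mem_span_singleton'.mp h1
    have h2 : (c' * g) * p = α * p := by rw [mul_assoc, hg, hc']
    exact Ideal.mem_span_singleton'.mpr ⟨c', O.mul_cancel_right hp0 h2⟩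
  constructor
  · -- the factorization with bounded g
    obtain ⟨bg, hbg⟩ := O.exists_isBound g
    refine ⟨g, hg.symm, bg, ?_, hbg⟩
    intro h0
    have h1 : Ideal.span {α} ≤ Ideal.span {bg} :=
      hbg.2.2 _ hα2 (by rw [Ideal.span_le, Set.singleton_subset_iff]; exact hαg)
    rw [h0, Ideal.span_singleton_eq_bot.mpr rfl] at h1
    exact hα0 (by simpa using h1 (hself α))
  · -- IsBound p π
    obtain ⟨q, hq⟩ := O.exists_isBound p
    -- π ∈ Rq
    obtain ⟨s, hs⟩ := Ideal.mem_span_singleton'.mp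
      (hq.2.2 _ hπ2 hπp (hself π))
    have hq0 : q ≠ 0 := by
      intro h0
      rw [h0, mul_zero] at hs
      exact hπ0 hs.symm
    have hs0 : s ≠ 0 := by
      intro h0
      rw [h0, zero_mul] at hs
      exact hπ0 hs.symm
    -- α * q ∈ Rb
    have hαq : α * q ∈ (Ideal.span {b} : Ideal R) := by
      set K : Ideal R := Submodule.span R ((α * ·) '' (Ideal.span {q} : Ideal R)) with hK
      have hK2 : IsTwoSidedIdeal' K := by
        intro z hz r
        induction hz using Submodule.span_induction with
        | mem y hy =>
          obtain ⟨j, hj, rfl⟩ := hy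
          apply Submodule.subset_span
          exact ⟨j * r, hq.2.1 j hj r, (mul_assoc α j r).symm⟩
        | zero => rw [zero_mul]; exact Submodule.zero_mem K
        | add a b _ _ ha hb => rw [add_mul]; exact Submodule.add_mem K ha hb
        | smul t a _ ha =>
          rw [smul_eq_mul, mul_assoc]
          exact Ideal.mul_mem_left K t ha
      have hKf : K ≤ Ideal.span {f} := by
        rw [hK, Submodule.span_le]
        rintro y ⟨j, hj, rfl⟩
        exact OreExt.alpha_mul_mem hb.1 hfact hα2 hp j (hq.1 hj)
      have := hb.2.2 K hK2 hKf
      exact this (Submodule.subset_span ⟨q, hself q, rfl⟩)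
    obtain ⟨t, ht⟩ := Ideal.mem_span_singleton'.mp hαq
    have hαq0 : α * q ≠ 0 := O.mul_ne_zero'' hα0 hq0
    have ht0 : t ≠ 0 := by
      intro h0
      rw [h0, zero_mul] at ht
      exact hαq0 ht.symm
    have hb0 : b ≠ 0 := hfact ▸ O.mul_ne_zero'' hα0 hπ0
    -- degree bookkeeping
    have e1 : O.ndeg α + O.ndeg q = O.ndeg t + (O.ndeg α + O.ndeg π) := by
      have h1 := (O.mul_ne_zero_ndeg hα0 hq0).2
      have h2 := (O.mul_ne_zero_ndeg ht0 hb0).2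
      have h3 : O.ndeg b = O.ndeg α + O.ndeg π := by
        rw [hfact]
        exact (O.mul_ne_zero_ndeg hα0 hπ0).2
      rw [← h1, ← ht, h2, h3]
    have e2 : O.ndeg π = O.ndeg s + O.ndeg q := by
      rw [← hs]
      exact (O.mul_ne_zero_ndeg hs0 hq0).2
    have hs_ndeg : O.ndeg s = 0 := by omega
    -- s is a nonzero constant, so q ∈ Rπ
    obtain ⟨d, hd0, hsd⟩ : ∃ d : D, d ≠ 0 ∧ s = O.C d := by
      refine ⟨O.e s 0, ?_, O.eq_C_of_ndeg_zero hs_ndeg⟩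
      have := O.lc_ne_zero hs0
      rwa [OreExt.lc, hs_ndeg] at this
    have hqπ : q ∈ (Ideal.span {π} : Ideal R) := by
      refine Ideal.mem_span_singleton'.mpr ⟨O.C d⁻¹, ?_⟩
      rw [← hs, hsd, ← mul_assoc, ← map_mul, inv_mul_cancel₀ hd0, map_one, one_mul]
    refine ⟨hπp, hπ2, fun J hJ2 hJle => ?_⟩
    refine (hq.2.2 J hJ2 hJle).trans ?_
    rw [Ideal.span_le, Set.singleton_subset_iff]
    exact hqπ
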